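/- If P is in the solitaire orbit of the line L_n, then for every k with 1 ≤ k ≤ n, the number of points of P in the first k columns {0,…,k−1} × ℤ is at most k. -/

import Mathlib

open Set Relation

/-- Points of the plane lattice. -/
abbrev Pt : Type := ℤ × ℤ

/-- The triangle shape `T = {(0,1),(1,1),(1,0)}`. -/
def Tshape : Set Pt := {(0, 1), (1, 1), (1, 0)}

/-- Translate of a set of points by a vector. -/
def transl (v : Pt) (S : Set Pt) : Set Pt := (fun p => v + p) '' S

/-- Translate of a finite set of points by a vector. -/
def transF (v : Pt) (S : Finset Pt) : Finset Pt := S.image (fun p => v + p)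

/-- A set is filled if every translate of `T` containing at least two of its
points is contained in it. -/
def Filled (F : Set Pt) : Prop :=
  ∀ v : Pt, 2 ≤ (F ∩ transl v Tshape).ncard → transl v Tshape ⊆ F

/-- The fill closure `φ(P)`: smallest filled superset of `P`. -/
def fill (P : Set Pt) : Set Pt := ⋂₀ {F | P ⊆ F ∧ Filled F}

/-- A single triangle solitaire move: if a translate `v + T` contains exactly two
points of `P`, replace one of them by the third point of `v + T`. -/
def Move (P Q : Finset Pt) : Prop :=
  ∃ v x y : Pt, x ∈ Tshape ∧ y ∈ Tshape ∧ x ≠ y ∧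
    v + x ∈ P ∧ v + y ∉ P ∧
    ((P : Set Pt) ∩ transl v Tshape).ncard = 2 ∧
    (Q : Set Pt) = insert (v + y) ((P : Set Pt) \ {v + x})

/-- `Q` is in the solitaire orbit of `P`. -/
def InOrbit (P Q : Finset Pt) : Prop := Relation.ReflTransGen Move P Q

/-- The discrete triangle `T_n = {(a,b) ∈ {0,…,n−1}² : a + b ≥ n − 1}`. -/
def triangle (n : ℕ) : Set Pt :=
  {p | 0 ≤ p.1 ∧ p.1 < (n : ℤ) ∧ 0 ≤ p.2 ∧ p.2 < (n : ℤ) ∧ (n : ℤ) - 1 ≤ p.1 + p.2}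

/-- Neighbourhood of a point: the other points sharing a translate of `T` with it. -/
def nbr (x : Pt) : Set Pt :=
  {y | y ≠ x ∧ ∃ v : Pt, x ∈ transl v Tshape ∧ y ∈ transl v Tshape}

/-- Neighbourhood of a set. -/
def nbrSet (A : Set Pt) : Set Pt := ⋃ a ∈ A, nbr a

/-- Two sets touch if one meets the neighbourhood of the other. -/
def Touch (A B : Set Pt) : Prop := (A ∩ nbrSet B).Nonempty ∨ (B ∩ nbrSet A).Nonempty

/-- `(r, k, v)` is a decomposition of `φ(P)` into pairwise non-touching
translated triangles `vᵢ + T_{kᵢ}`. -/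
def IsDecomp (P : Finset Pt) (r : ℕ) (k : Fin r → ℕ) (v : Fin r → Pt) : Prop :=
  (fill (P : Set Pt) = ⋃ i, transl (v i) (triangle (k i))) ∧
  (∀ i, 1 ≤ k i) ∧
  (∀ i j, i ≠ j → ¬ Touch (transl (v i) (triangle (k i))) (transl (v j) (triangle (k j))))

/-- The horizontal line `L_n = {(a, n−1) : 0 ≤ a ≤ n−1}` (top edge of `T_n`). -/
def lineF (n : ℕ) : Finset Pt :=
  (Finset.range n).image (fun a : ℕ => (((a : ℤ), (n : ℤ) - 1) : Pt))

/-- The vertical edge `{(n−1, b) : 0 ≤ b ≤ n−1}` of `T_n`. -/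
def vlineF (n : ℕ) : Finset Pt :=
  (Finset.range n).image (fun b : ℕ => ((((n : ℤ) - 1), (b : ℤ)) : Pt))

/-- The diagonal edge `{(a, n−1−a) : 0 ≤ a ≤ n−1}` of `T_n`. -/
def dlineF (n : ℕ) : Finset Pt :=
  (Finset.range n).image (fun a : ℕ => (((a : ℤ), (n : ℤ) - 1 - (a : ℤ)) : Pt))

/-- The points of `T_n` below the top line, listed row `n−2` down to row `0`,
each row from right to left. -/
def belowPts (n : ℕ) : List Pt :=
  (List.range (n - 1)).flatMap (fun i =>
    (List.range (n - 1 - i)).map (fun t =>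
      (((n : ℤ) - 1 - (t : ℤ), (n : ℤ) - 2 - (i : ℤ)) : Pt)))

/-- The canonical pattern `P_{n,k}`: the line `L_n` together with the first `k`
points of `T_n \ L_n` in the order: row `n−2` right to left, then row `n−3`, etc. -/
def PnkF (n k : ℕ) : Finset Pt := lineF n ∪ ((belowPts n).take k).toFinset

/-- A TEP family on the triangle shape, with cells ordered `(0,1), (1,1), (1,0)`:
any two of the three symbols determine the third uniquely. -/
def IsTEP {A : Type} (R : Set (A × A × A)) : Prop :=
  (∀ a b : A, ∃! c : A, (a, b, c) ∈ R) ∧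
  (∀ a c : A, ∃! b : A, (a, b, c) ∈ R) ∧
  (∀ b c : A, ∃! a : A, (a, b, c) ∈ R)

/-- A colouring is valid on `T_n` if every translate of `T` inside `T_n`
carries a pattern of `R`. -/
def ValidOn {A : Type} (R : Set (A × A × A)) (n : ℕ) (x : Pt → A) : Prop :=
  ∀ v : Pt, transl v Tshape ⊆ triangle n →
    (x (v + (0, 1)), x (v + (1, 1)), x (v + (1, 0))) ∈ R

/-- One completion step: a translate of `T` inside `T_n` has exactly two
coloured cells; colour the third using the TEP rule `R`. States are pairs
(set of coloured cells, colouring). -/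
def TStep {A : Type} (R : Set (A × A × A)) (n : ℕ)
    (s t : Set Pt × (Pt → A)) : Prop :=
  ∃ v : Pt, transl v Tshape ⊆ triangle n ∧
    ∃ c ∈ transl v Tshape, c ∉ s.1 ∧ transl v Tshape \ {c} ⊆ s.1 ∧
      t.1 = insert c s.1 ∧ (∀ p : Pt, p ≠ c → t.2 p = s.2 p) ∧
      (t.2 (v + (0, 1)), t.2 (v + (1, 1)), t.2 (v + (1, 0))) ∈ R

/-- `P ⊆ T_n` is a basis: for every colouring of `P`, every maximal run of the
iterative completion process covers `T_n` and produces a valid pattern. -/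
def IsBasis {A : Type} (R : Set (A × A × A)) (n : ℕ) (P : Finset Pt) : Prop :=
  (P : Set Pt) ⊆ triangle n ∧
  ∀ q : Pt → A, ∀ s : Set Pt × (Pt → A),
    Relation.ReflTransGen (TStep R n) ((P : Set Pt), q) s →
    (∀ t, ¬ TStep R n s t) →
    triangle n ⊆ s.1 ∧ ValidOn R n s.2

/-- Number of points of `P` in columns `0,…,k−1`. -/
def colF (P : Finset Pt) (k : ℕ) : ℕ :=
  (P.filter (fun p => 0 ≤ p.1 ∧ p.1 < (k : ℤ))).card

/-- The invariant preserved by solitaire moves. -/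
def ColInv (P : Finset Pt) : Prop :=
  (∀ p ∈ P, 0 ≤ p.1) ∧ ∀ k : ℕ, colF P k ≤ k

lemma card_swap (P : Finset Pt) (a b : Pt) (ha : a ∈ P) (hb : b ∉ P) (k : ℕ) :
    colF (insert b (P.erase a)) k + (if 0 ≤ a.1 ∧ a.1 < (k : ℤ) then 1 else 0)
      = colF P k + (if 0 ≤ b.1 ∧ b.1 < (k : ℤ) then 1 else 0) := by
  classical
  unfold colF
  set p : Pt → Prop := fun q => 0 ≤ q.1 ∧ q.1 < (k : ℤ) with hp
  have hbe : b ∉ (P.filter (fun q => 0 ≤ q.1 ∧ q.1 < (k : ℤ))).erase a :=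
    fun h => hb (Finset.mem_of_mem_filter _ (Finset.mem_of_mem_erase h))
  have hE : ((P.filter (fun q => 0 ≤ q.1 ∧ q.1 < (k : ℤ))).erase a).card
      + (if 0 ≤ a.1 ∧ a.1 < (k : ℤ) then 1 else 0)
      = (P.filter (fun q => 0 ≤ q.1 ∧ q.1 < (k : ℤ))).card := by
    by_cases hpa : 0 ≤ a.1 ∧ a.1 < (k : ℤ)
    · rw [if_pos hpa]
      exact Finset.card_erase_add_one (Finset.mem_filter.2 ⟨ha, hpa⟩)
    · have hno : a ∉ P.filter (fun q => 0 ≤ q.1 ∧ q.1 < (k : ℤ)) :=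
        fun h => hpa (Finset.mem_filter.1 h).2
      rw [if_neg hpa, Finset.erase_eq_of_notMem hno, add_zero]
  rw [Finset.filter_insert, Finset.filter_erase]
  by_cases hpb : 0 ≤ b.1 ∧ b.1 < (k : ℤ)
  · rw [if_pos hpb, if_pos hpb, Finset.card_insert_of_notMem hbe, ← hE]
    ring
  · rw [if_neg hpb, if_neg hpb, add_zero, hE]

lemma two_in_col (P : Finset Pt) (inv2 : ∀ k : ℕ, colF P k ≤ k)
    (a c : Pt) (ha : a ∈ P) (hc : c ∈ P) (hne : a ≠ c) (hcol : a.1 = c.1)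
    (m : ℕ) (hm : a.1 = (m : ℤ)) :
    colF P m + 2 ≤ m + 1 := by
  classical
  have hsub : insert a (insert c (P.filter (fun q => 0 ≤ q.1 ∧ q.1 < (m : ℤ))))
      ⊆ P.filter (fun q => 0 ≤ q.1 ∧ q.1 < ((m + 1 : ℕ) : ℤ)) := by
    intro q hq
    rcases Finset.mem_insert.1 hq with h | hq
    · rw [h]
      exact Finset.mem_filter.2 ⟨ha, by push_cast; omega⟩
    rcases Finset.mem_insert.1 hq with h | hq
    · have hcm : c.1 = (m : ℤ) := hcol ▸ hm
      rw [h]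
      exact Finset.mem_filter.2 ⟨hc, by push_cast; omega⟩
    · rcases Finset.mem_filter.1 hq with ⟨h1, h2, h3⟩
      exact Finset.mem_filter.2 ⟨h1, by push_cast; omega⟩
  have hcnot : c ∉ P.filter (fun q => 0 ≤ q.1 ∧ q.1 < (m : ℤ)) := by
    intro hmem
    rcases Finset.mem_filter.1 hmem with ⟨_, _, h3⟩
    have hcm : c.1 = (m : ℤ) := hcol ▸ hm
    omega
  have hanot : a ∉ insert c (P.filter (fun q => 0 ≤ q.1 ∧ q.1 < (m : ℤ))) := by
    intro hmem
    rcases Finset.mem_insert.1 hmem with rfl | hmem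
    · exact hne rfl
    · rcases Finset.mem_filter.1 hmem with ⟨_, _, h3⟩
      omega
  have hcard : colF P m + 2
      = (insert a (insert c (P.filter (fun q => 0 ≤ q.1 ∧ q.1 < (m : ℤ))))).card := by
    rw [Finset.card_insert_of_notMem hanot, Finset.card_insert_of_notMem hcnot]
    unfold colF
    ring
  calc colF P m + 2 = _ := hcard
    _ ≤ (P.filter (fun q => 0 ≤ q.1 ∧ q.1 < ((m + 1 : ℕ) : ℤ))).card :=
        Finset.card_le_card hsub
    _ ≤ m + 1 := inv2 (m + 1)

lemma move_colInv {P Q : Finset Pt} (hm : Move P Q) (hP : ColInv P) : ColInv Q := by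
  classical
  obtain ⟨v, x, y, hx, hy, hxy, hPx, hPy, hcard2, hQ⟩ := hm
  obtain ⟨inv1, inv2⟩ := hP
  have hQF : Q = insert (v + y) (P.erase (v + x)) := by
    apply Finset.coe_injective
    rw [hQ, Finset.coe_insert, Finset.coe_erase]
  -- extract the third point of the translate
  obtain ⟨t, ht, htx, hty, hPt⟩ :
      ∃ t, t ∈ Tshape ∧ t ≠ x ∧ t ≠ y ∧ v + t ∈ P := by
    obtain ⟨A, B, hAB, hS⟩ := Set.ncard_eq_two.1 hcard2
    have hxS : v + x ∈ (P : Set Pt) ∩ transl v Tshape := ⟨hPx, ⟨x, hx, rfl⟩⟩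
    have hU : ∃ u, u ∈ (P : Set Pt) ∩ transl v Tshape ∧ u ≠ v + x := by
      rw [hS] at hxS ⊢
      simp only [Set.mem_insert_iff, Set.mem_singleton_iff] at hxS
      rcases hxS with h | h
      · exact ⟨B, by simp, by rw [h]; exact fun hh => hAB hh.symm⟩
      · exact ⟨A, by simp, by rw [h]; exact hAB⟩
    obtain ⟨u, ⟨huP, hut⟩, hux⟩ := hU
    obtain ⟨t, ht, rfl⟩ := hut
    refine ⟨t, ht, fun h => hux (by rw [h]), fun h => hPy (by rw [← h]; exact huP), huP⟩
  have hx' : x = ((0 : ℤ), (1 : ℤ)) ∨ x = (1, 1) ∨ x = (1, 0) := by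
    simpa [Tshape] using hx
  have hy' : y = ((0 : ℤ), (1 : ℤ)) ∨ y = (1, 1) ∨ y = (1, 0) := by
    simpa [Tshape] using hy
  have ht' : t = ((0 : ℤ), (1 : ℤ)) ∨ t = (1, 1) ∨ t = (1, 0) := by
    simpa [Tshape] using ht
  have hx01 : x.1 = 0 ∨ x.1 = 1 := by rcases hx' with rfl | rfl | rfl <;> simp
  have hy01 : y.1 = 0 ∨ y.1 = 1 := by rcases hy' with rfl | rfl | rfl <;> simp
  have hnevt : v + x ≠ v + t := fun h => htx (add_left_cancel h).symm
  -- if y has column 0 then x and t have column 1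
  have hkey : y.1 = 0 → x.1 = 1 ∧ t.1 = 1 := by
    intro hy0
    have hyy : y = ((0 : ℤ), (1 : ℤ)) := by
      rcases hy' with rfl | rfl | rfl
      · rfl
      · simp at hy0
      · simp at hy0
    constructor
    · rcases hx' with rfl | rfl | rfl
      · exact absurd hyy.symm hxy
      · simp
      · simp
    · rcases ht' with rfl | rfl | rfl
      · exact absurd hyy.symm hty
      · simp
      · simp
  have hvx0 : 0 ≤ v.1 + x.1 := by
    have := inv1 _ hPx
    rwa [Prod.fst_add] at this
  constructor
  · -- nonnegativity of columns
    intro q hq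
    rw [hQF] at hq
    rcases Finset.mem_insert.1 hq with rfl | hq'
    · rw [Prod.fst_add]
      by_cases hy0 : y.1 = 0
      · obtain ⟨hx1, ht1⟩ := hkey hy0
        by_contra hneg
        push_neg at hneg
        -- then v.1 + 1 = 0 and there are two points in column 0
        have h2 := two_in_col P inv2 (v + x) (v + t) hPx hPt hnevt
          (by rw [Prod.fst_add, Prod.fst_add, hx1, ht1]) 0
          (by rw [Prod.fst_add, hx1]; omega)
        omega
      · rcases hy01 with h | h
        · exact absurd h hy0
        · omega
    · exact inv1 _ (Finset.mem_of_mem_erase hq')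
  · -- column counting
    intro k
    have key := card_swap P (v + x) (v + y) hPx hPy k
    rw [← hQF] at key
    have hk := inv2 k
    by_cases hpb : 0 ≤ (v + y).1 ∧ (v + y).1 < (k : ℤ)
    · by_cases hpa : 0 ≤ (v + x).1 ∧ (v + x).1 < (k : ℤ)
      · rw [if_pos hpa, if_pos hpb] at key
        omega
      · -- the hard case: point enters the first k columns
        have hax : 0 ≤ (v + x).1 := inv1 _ hPx
        have hge : (k : ℤ) ≤ (v + x).1 := by
          by_contra hlt
          exact hpa ⟨hax, by omega⟩
        rw [Prod.fst_add] at hax hge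
        have hby1 : 0 ≤ v.1 + y.1 := by have := hpb.1; rwa [Prod.fst_add] at this
        have hby2 : v.1 + y.1 < (k : ℤ) := by have := hpb.2; rwa [Prod.fst_add] at this
        have hy0 : y.1 = 0 := by
          rcases hy01 with h | h
          · exact h
          · rcases hx01 with h' | h' <;> omega
        obtain ⟨hx1, ht1⟩ := hkey hy0
        have h2 := two_in_col P inv2 (v + x) (v + t) hPx hPt hnevt
          (by rw [Prod.fst_add, Prod.fst_add, hx1, ht1]) k
          (by rw [Prod.fst_add, hx1]; omega)
        rw [if_neg hpa, if_pos hpb] at key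
        omega
    · rw [if_neg hpb, add_zero] at key
      by_cases hpa : 0 ≤ (v + x).1 ∧ (v + x).1 < (k : ℤ)
      · rw [if_pos hpa] at key; omega
      · rw [if_neg hpa, add_zero] at key; omega

lemma colInv_lineF (n : ℕ) : ColInv (lineF n) := by
  classical
  constructor
  · intro p hp
    simp only [lineF, Finset.mem_image, Finset.mem_range] at hp
    obtain ⟨a, _, rfl⟩ := hp
    exact Int.natCast_nonneg a
  · intro k
    unfold colF
    have := Finset.card_le_card_of_injOn (fun p : Pt => p.1.toNat)
      (s := (lineF n).filter (fun p => 0 ≤ p.1 ∧ p.1 < (k : ℤ)))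
      (t := Finset.range k)
      (by
        intro p hp
        rcases Finset.mem_filter.1 hp with ⟨_, h0, hlt⟩
        simp only [Finset.coe_range, Set.mem_Iio, Finset.mem_coe, Finset.mem_range]
        omega)
      (by
        intro p hp q hq hpq
        rcases Finset.mem_filter.1 hp with ⟨hp1, h0p, _⟩
        rcases Finset.mem_filter.1 hq with ⟨hq1, h0q, _⟩
        simp only [lineF, Finset.mem_image, Finset.mem_range] at hp1 hq1
        obtain ⟨a, _, rfl⟩ := hp1
        obtain ⟨b, _, rfl⟩ := hq1
        simp only [Int.toNat_natCast] at hpq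
        simp [hpq])
    simpa using this

/-- a pattern in the orbit of `L_n` has at most `k` points in the
first `k` columns, for every `1 ≤ k ≤ n`. -/
theorem line_orbit_column_bound (n : ℕ) (P : Finset Pt)
    (h : InOrbit (lineF n) P) (k : ℕ) (hk1 : 1 ≤ k) (hkn : k ≤ n) :
    (P.filter (fun p => 0 ≤ p.1 ∧ p.1 < (k : ℤ))).card ≤ k := by
  have hInv : ColInv P := by
    induction h with
    | refl => exact colInv_lineF n
    | tail _ hmv ih => exact move_colInv hmv ih
  exact hInv.2 k
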